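/- There exists a constant C > 0 such that for every n ∈ ℕ, n ≥ 1, there exists a constant c_n > 0 with c_n · ρ_n(ū,v̄)^{1+C/n} ≤ ρ(γ_n(ū), γ_n(v̄)) ≤ ρ_n(ū,v̄) for all ū, v̄ ∈ (Λⁿ)^ℕ. -/

import Mathlib

open Set Filter MeasureTheory Metric

noncomputable section

/-- Composition of the maps of an IFS along a finite word (in order). -/
def compWord {Λ : Type*} (f : Λ → ℝ → ℝ) : List Λ → ℝ → ℝ
  | [] => id
  | i :: w => f i ∘ compWord f w

/-- The chain-rule derivative of `compWord f w`, expressed via the derivatives `f'`. -/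
def wordDeriv {Λ : Type*} (f f' : Λ → ℝ → ℝ) : List Λ → ℝ → ℝ
  | [] => fun _ => 1
  | i :: w => fun x => f' i (compWord f w x) * wordDeriv f f' w x

/-- `‖f_w'‖`: the sup over `[0,1]` of `|f_w'|`. -/
def wordDerivNorm {Λ : Type*} (f f' : Λ → ℝ → ℝ) (w : List Λ) : ℝ :=
  sSup ((fun x => |wordDeriv f f' w x|) '' Icc (0:ℝ) 1)

/-- A self-conformal IFS on `[0,1]`: finitely many uniformly contracting differentiable maps
with Hölder continuous non-vanishing derivatives. -/
structure ConformalIFS (Λ : Type*) where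
  f : Λ → ℝ → ℝ
  f' : Λ → ℝ → ℝ
  mapsTo : ∀ i, MapsTo (f i) (Icc (0:ℝ) 1) (Icc (0:ℝ) 1)
  hasDeriv : ∀ i, ∀ x ∈ Icc (0:ℝ) 1, HasDerivWithinAt (f i) (f' i x) (Icc (0:ℝ) 1) x
  exponent : ℝ
  exponent_pos : 0 < exponent
  holder : ∀ i, ∃ C : ℝ, ∀ x ∈ Icc (0:ℝ) 1, ∀ y ∈ Icc (0:ℝ) 1,
    |f' i x - f' i y| ≤ C * |x - y| ^ exponent
  nonvanishing : ∀ i, ∀ x ∈ Icc (0:ℝ) 1, f' i x ≠ 0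
  ratio : ℝ
  ratio_pos : 0 < ratio
  ratio_lt_one : ratio < 1
  contracting : ∀ i, ∀ x ∈ Icc (0:ℝ) 1, ∀ y ∈ Icc (0:ℝ) 1, |f i x - f i y| ≤ ratio * |x - y|

/-- The open set condition (with an open subset of `[0,1]`) for a conformal IFS. -/
def CoordOSC {Λ : Type*} (F : ConformalIFS Λ) : Prop :=
  ∃ U : Set ℝ, U.Nonempty ∧ U ⊆ Icc 0 1 ∧ (∃ O : Set ℝ, IsOpen O ∧ U = O ∩ Icc 0 1) ∧
    (∀ i, F.f i '' U ⊆ U) ∧ Pairwise fun i i' => Disjoint (F.f i '' U) (F.f i' '' U)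

end
noncomputable section
/-- Generic "longest common prefix" distance on sequences: `0` for equal sequences, and
otherwise the value `val` of the longest common initial segment. -/
noncomputable def rhoDist {Γ : Type*} (val : List Γ → ℝ) (u v : ℕ → Γ) : ℝ := by
  classical
  exact if h : u = v then 0
    else val (List.ofFn fun k : Fin (Nat.find (Function.ne_iff.mp h)) => u k.val)

/-- The concatenation map `(Λⁿ)^ℕ → Λ^ℕ`. -/
def concatMap {Λ : Type*} (n : ℕ) (hn : 0 < n) (u : ℕ → (Fin n → Λ)) : ℕ → Λ :=
  fun m => u (m / n) ⟨m % n, Nat.mod_lt m hn⟩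

/-- The metric `ρ` on `Λ^ℕ`: `ρ(u,v) = ‖f'_{u∧v}‖`. -/
noncomputable def rho {Λ : Type*} (F : ConformalIFS Λ) (u v : ℕ → Λ) : ℝ :=
  rhoDist (wordDerivNorm F.f F.f') u v

/-- The metric `ρ_n` on `(Λⁿ)^ℕ`: the product of `‖f'_{ūₖ}‖` over the initial blocks on which
the two sequences agree. -/
noncomputable def rhoN {Λ : Type*} (F : ConformalIFS Λ) (n : ℕ) (u v : ℕ → (Fin n → Λ)) : ℝ :=
  rhoDist (fun L => (L.map fun blk => wordDerivNorm F.f F.f' (List.ofFn blk)).prod) u v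

namespace Stmt7Aux

open Topology

variable {Λ : Type} (F : ConformalIFS Λ)

lemma compWord_mapsTo (w : List Λ) : MapsTo (compWord F.f w) (Icc (0:ℝ) 1) (Icc (0:ℝ) 1) := by
  induction w with
  | nil => exact mapsTo_id _
  | cons i w ih => exact (F.mapsTo i).comp ih

lemma compWord_append (w₁ w₂ : List Λ) (x : ℝ) :
    compWord F.f (w₁ ++ w₂) x = compWord F.f w₁ (compWord F.f w₂ x) := by
  induction w₁ with
  | nil => rfl
  | cons i w ih => simp [compWord, ih]

lemma wordDeriv_append (w₁ w₂ : List Λ) (x : ℝ) :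
    wordDeriv F.f F.f' (w₁ ++ w₂) x
      = wordDeriv F.f F.f' w₁ (compWord F.f w₂ x) * wordDeriv F.f F.f' w₂ x := by
  induction w₁ with
  | nil => simp [wordDeriv]
  | cons i w ih => simp [wordDeriv, ih, compWord_append]; ring

lemma contOn_f' (i : Λ) : ContinuousOn (F.f' i) (Icc (0:ℝ) 1) := by
  obtain ⟨C, hC⟩ := F.holder i
  intro x hx
  have h1 : Tendsto (fun y => C * |y - x| ^ F.exponent) (𝓝[Icc (0:ℝ) 1] x) (𝓝 0) := by
    have hy : Tendsto (fun y : ℝ => |y - x|) (𝓝[Icc (0:ℝ) 1] x) (𝓝 0) := by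
      have : Tendsto (fun y : ℝ => |y - x|) (𝓝 x) (𝓝 |x - x|) :=
        (continuous_abs.comp (continuous_id.sub continuous_const)).tendsto x
      simpa using this.mono_left nhdsWithin_le_nhds
    have hr : ContinuousAt (fun t : ℝ => t ^ F.exponent) 0 :=
      Real.continuousAt_rpow_const 0 F.exponent (Or.inr F.exponent_pos.le)
    have := (hr.tendsto.comp hy).const_mul C
    simpa [Real.zero_rpow F.exponent_pos.ne'] using this
  have h2 : Tendsto (fun y => F.f' i y - F.f' i x) (𝓝[Icc (0:ℝ) 1] x) (𝓝 0) := by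
    apply squeeze_zero_norm' _ h1
    filter_upwards [self_mem_nhdsWithin] with y hy
    simpa using hC y hy x hx
  have := h2.add (tendsto_const_nhds (x := F.f' i x))
  simpa [ContinuousWithinAt] using this

lemma contOn_f (i : Λ) : ContinuousOn (F.f i) (Icc (0:ℝ) 1) :=
  fun x hx => (F.hasDeriv i x hx).continuousWithinAt

lemma contOn_compWord (w : List Λ) : ContinuousOn (compWord F.f w) (Icc (0:ℝ) 1) := by
  induction w with
  | nil => exact continuousOn_id
  | cons i w ih => exact (contOn_f F i).comp ih (compWord_mapsTo F w)

lemma contOn_wordDeriv (w : List Λ) : ContinuousOn (wordDeriv F.f F.f' w) (Icc (0:ℝ) 1) := by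
  induction w with
  | nil => exact continuousOn_const
  | cons i w ih =>
    exact ((contOn_f' F i).comp (contOn_compWord F w) (compWord_mapsTo F w)).mul ih

lemma Icc_ne : (Icc (0:ℝ) 1).Nonempty := nonempty_Icc.2 zero_le_one

lemma le_norm (w : List Λ) {x : ℝ} (hx : x ∈ Icc (0:ℝ) 1) :
    |wordDeriv F.f F.f' w x| ≤ wordDerivNorm F.f F.f' w := by
  have hc : IsCompact ((fun x => |wordDeriv F.f F.f' w x|) '' Icc (0:ℝ) 1) :=
    isCompact_Icc.image_of_continuousOn (contOn_wordDeriv F w).abs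
  exact le_csSup hc.bddAbove ⟨x, hx, rfl⟩

lemma norm_exists (w : List Λ) :
    ∃ x ∈ Icc (0:ℝ) 1, wordDerivNorm F.f F.f' w = |wordDeriv F.f F.f' w x| := by
  obtain ⟨x, hx, hmax⟩ := isCompact_Icc.exists_isMaxOn (Icc_ne) (contOn_wordDeriv F w).abs
  refine ⟨x, hx, le_antisymm ?_ (le_norm F w hx)⟩
  exact csSup_le ((Icc_ne).image _) (by rintro _ ⟨y, hy, rfl⟩; exact hmax hy)

lemma norm_nonneg' (w : List Λ) : 0 ≤ wordDerivNorm F.f F.f' w :=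
  (abs_nonneg _).trans (le_norm F w (left_mem_Icc.2 zero_le_one))

lemma abs_f'_le_ratio (i : Λ) {x : ℝ} (hx : x ∈ Icc (0:ℝ) 1) : |F.f' i x| ≤ F.ratio := by
  have hd := F.hasDeriv i x hx
  rw [hasDerivWithinAt_iff_tendsto_slope] at hd
  have hne : (𝓝[Icc (0:ℝ) 1 \ {x}] x).NeBot := by
    rcases lt_or_eq_of_le hx.2 with h1 | h1
    · have hsub : Ioc x 1 ⊆ Icc (0:ℝ) 1 \ {x} :=
        fun y hy => ⟨⟨hx.1.trans hy.1.le, hy.2⟩, hy.1.ne'⟩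
      have : (𝓝[Ioc x 1] x).NeBot := by
        rw [← mem_closure_iff_nhdsWithin_neBot, closure_Ioc h1.ne]
        exact ⟨le_refl x, h1.le⟩
      exact this.mono (nhdsWithin_mono _ hsub)
    · have hsub : Ico (0:ℝ) 1 ⊆ Icc (0:ℝ) 1 \ {x} := by
        intro y hy
        refine ⟨⟨hy.1, hy.2.le⟩, ?_⟩
        intro hxy
        rw [mem_singleton_iff] at hxy
        rw [hxy, h1] at hy
        exact lt_irrefl 1 hy.2
      have : (𝓝[Ico (0:ℝ) 1] x).NeBot := by
        rw [← mem_closure_iff_nhdsWithin_neBot, closure_Ico (by norm_num : (0:ℝ) ≠ 1)]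
        exact hx
      exact this.mono (nhdsWithin_mono _ hsub)
  have habs : Tendsto (fun y => |slope (F.f i) x y|) (𝓝[Icc (0:ℝ) 1 \ {x}] x) (𝓝 |F.f' i x|) :=
    (continuous_abs.tendsto _).comp hd
  refine le_of_tendsto habs ?_
  filter_upwards [self_mem_nhdsWithin] with y hy
  have hyI : y ∈ Icc (0:ℝ) 1 := hy.1
  have hyx : y ≠ x := hy.2
  have hcon := F.contracting i y hyI x hx
  rw [slope_def_field]
  rw [div_eq_mul_inv, abs_mul, abs_inv]
  have hpos : 0 < |y - x| := abs_pos.2 (sub_ne_zero.2 hyx)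
  calc |F.f i y - F.f i x| * |y - x|⁻¹ ≤ (F.ratio * |y - x|) * |y - x|⁻¹ :=
        mul_le_mul_of_nonneg_right hcon (inv_nonneg.2 hpos.le)
    _ = F.ratio := by field_simp

lemma wordDeriv_le (w : List Λ) {x : ℝ} (hx : x ∈ Icc (0:ℝ) 1) :
    |wordDeriv F.f F.f' w x| ≤ F.ratio ^ w.length := by
  induction w with
  | nil => simp [wordDeriv]
  | cons i w ih =>
    have h1 := abs_f'_le_ratio F i (compWord_mapsTo F w hx)
    calc |wordDeriv F.f F.f' (i :: w) x|
        = |F.f' i (compWord F.f w x)| * |wordDeriv F.f F.f' w x| := by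
          simp [wordDeriv, abs_mul]
      _ ≤ F.ratio * F.ratio ^ w.length :=
          mul_le_mul h1 ih (abs_nonneg _) F.ratio_pos.le
      _ = F.ratio ^ (i :: w).length := by rw [List.length_cons, pow_succ]; ring

lemma norm_le_pow (w : List Λ) : wordDerivNorm F.f F.f' w ≤ F.ratio ^ w.length := by
  refine csSup_le ((Icc_ne).image _) ?_
  rintro _ ⟨y, hy, rfl⟩
  exact wordDeriv_le F w hy

lemma compWord_lip (w : List Λ) {x y : ℝ} (hx : x ∈ Icc (0:ℝ) 1) (hy : y ∈ Icc (0:ℝ) 1) :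
    |compWord F.f w x - compWord F.f w y| ≤ F.ratio ^ w.length * |x - y| := by
  induction w with
  | nil => simp [compWord]
  | cons i w ih =>
    calc |F.f i (compWord F.f w x) - F.f i (compWord F.f w y)|
        ≤ F.ratio * |compWord F.f w x - compWord F.f w y| :=
          F.contracting i _ (compWord_mapsTo F w hx) _ (compWord_mapsTo F w hy)
      _ ≤ F.ratio * (F.ratio ^ w.length * |x - y|) :=
          mul_le_mul_of_nonneg_left ih F.ratio_pos.le
      _ = F.ratio ^ (i :: w).length * |x - y| := by rw [List.length_cons, pow_succ]; ring

variable [Fintype Λ] [Nonempty Λ]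

lemma exists_lb : ∃ b : ℝ, 0 < b ∧ b ≤ F.ratio ∧
    ∀ i : Λ, ∀ x ∈ Icc (0:ℝ) 1, b ≤ |F.f' i x| := by
  have key : ∀ i : Λ, ∃ bi : ℝ, 0 < bi ∧ ∀ x ∈ Icc (0:ℝ) 1, bi ≤ |F.f' i x| := by
    intro i
    obtain ⟨x, hx, hmin⟩ := isCompact_Icc.exists_isMinOn (Icc_ne) (contOn_f' F i).abs
    exact ⟨|F.f' i x|, abs_pos.2 (F.nonvanishing i x hx), fun y hy => hmin hy⟩
  choose bi hbi0 hbi using key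
  refine ⟨min (Finset.univ.inf' Finset.univ_nonempty bi) F.ratio, ?_, min_le_right _ _, ?_⟩
  · exact lt_min (by rw [Finset.lt_inf'_iff]; exact fun i _ => hbi0 i) F.ratio_pos
  · intro i x hx
    exact le_trans (min_le_left _ _)
      (le_trans (Finset.inf'_le _ (Finset.mem_univ i)) (hbi i x hx))

lemma exists_holder : ∃ H : ℝ, 0 ≤ H ∧ ∀ i : Λ, ∀ x ∈ Icc (0:ℝ) 1, ∀ y ∈ Icc (0:ℝ) 1,
    |F.f' i x - F.f' i y| ≤ H * |x - y| ^ F.exponent := by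
  choose Ci hCi using F.holder
  refine ⟨∑ i : Λ, max (Ci i) 0, Finset.sum_nonneg fun i _ => le_max_right _ _, ?_⟩
  intro i x hx y hy
  have h1 : |F.f' i x - F.f' i y| ≤ max (Ci i) 0 * |x - y| ^ F.exponent := by
    refine le_trans (hCi i x hx y hy) ?_
    exact mul_le_mul_of_nonneg_right (le_max_left _ _)
      (Real.rpow_nonneg (abs_nonneg _) _)
  refine h1.trans (mul_le_mul_of_nonneg_right ?_ (Real.rpow_nonneg (abs_nonneg _) _))
  exact Finset.single_le_sum (f := fun i => max (Ci i) 0)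
    (fun j _ => le_max_right _ _) (Finset.mem_univ i)

lemma distortion : ∃ D : ℝ, 1 ≤ D ∧ ∀ w : List Λ, ∀ x ∈ Icc (0:ℝ) 1, ∀ y ∈ Icc (0:ℝ) 1,
    wordDerivNorm F.f F.f' w ≤ D * |wordDeriv F.f F.f' w y| := by
  obtain ⟨b, hb0, hbr, hb⟩ := exists_lb F
  obtain ⟨H, hH0, hH⟩ := exists_holder F
  set s : ℝ := F.ratio ^ F.exponent with hs_def
  have hs0 : 0 ≤ s := Real.rpow_nonneg F.ratio_pos.le _
  have hs1 : s < 1 := Real.rpow_lt_one F.ratio_pos.le F.ratio_lt_one F.exponent_pos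
  set K : ℝ := H / b with hK_def
  have hK0 : 0 ≤ K := div_nonneg hH0 hb0.le
  have main : ∀ w : List Λ, ∀ x ∈ Icc (0:ℝ) 1, ∀ y ∈ Icc (0:ℝ) 1,
      |wordDeriv F.f F.f' w x|
        ≤ Real.exp (K * ∑ k ∈ Finset.range w.length, s ^ k) * |wordDeriv F.f F.f' w y| := by
    intro w
    induction w with
    | nil => intro x _ y _; simp [wordDeriv, Real.exp_zero]
    | cons i w ih =>
      intro x hx y hy
      set a := compWord F.f w x with ha_def
      set a' := compWord F.f w y with ha'_def
      have haI : a ∈ Icc (0:ℝ) 1 := compWord_mapsTo F w hx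
      have ha'I : a' ∈ Icc (0:ℝ) 1 := compWord_mapsTo F w hy
      have hxy1 : |x - y| ≤ 1 := by
        rw [abs_sub_le_iff]
        constructor <;> [skip; skip] <;> nlinarith [hx.1, hx.2, hy.1, hy.2]
      have haa' : |a - a'| ≤ F.ratio ^ w.length := by
        calc |a - a'| ≤ F.ratio ^ w.length * |x - y| := compWord_lip F w hx hy
          _ ≤ F.ratio ^ w.length * 1 :=
              mul_le_mul_of_nonneg_left hxy1 (pow_nonneg F.ratio_pos.le _)
          _ = F.ratio ^ w.length := mul_one _
      have hpow : |a - a'| ^ F.exponent ≤ s ^ w.length := by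
        have h1 : |a - a'| ^ F.exponent ≤ (F.ratio ^ w.length) ^ F.exponent :=
          Real.rpow_le_rpow (abs_nonneg _) haa' F.exponent_pos.le
        refine h1.trans_eq ?_
        rw [← Real.rpow_natCast F.ratio w.length, ← Real.rpow_mul F.ratio_pos.le,
          mul_comm, Real.rpow_mul F.ratio_pos.le, Real.rpow_natCast]
      have hstep : |F.f' i a| ≤ Real.exp (K * s ^ w.length) * |F.f' i a'| := by
        have h2 : |F.f' i a| ≤ |F.f' i a'| + H * |a - a'| ^ F.exponent := by
          have := abs_sub_abs_le_abs_sub (F.f' i a) (F.f' i a')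
          have := hH i a haI a' ha'I
          nlinarith
        have h3 : H * |a - a'| ^ F.exponent ≤ K * s ^ w.length * |F.f' i a'| := by
          have hKb : K * b = H := div_mul_cancel₀ H hb0.ne'
          have h4 : H * |a - a'| ^ F.exponent ≤ H * s ^ w.length :=
            mul_le_mul_of_nonneg_left hpow hH0
          have h5 : K * s ^ w.length * b ≤ K * s ^ w.length * |F.f' i a'| :=
            mul_le_mul_of_nonneg_left (hb i a' ha'I) (mul_nonneg hK0 (pow_nonneg hs0 _))
          nlinarith [pow_nonneg hs0 w.length]
        have h6 : |F.f' i a| ≤ (1 + K * s ^ w.length) * |F.f' i a'| := by nlinarith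
        refine h6.trans (mul_le_mul_of_nonneg_right ?_ (abs_nonneg _))
        have := Real.add_one_le_exp (K * s ^ w.length)
        linarith
      have hw := ih x hx y hy
      calc |wordDeriv F.f F.f' (i :: w) x|
          = |F.f' i a| * |wordDeriv F.f F.f' w x| := by simp [wordDeriv, abs_mul, ha_def]
        _ ≤ (Real.exp (K * s ^ w.length) * |F.f' i a'|)
              * (Real.exp (K * ∑ k ∈ Finset.range w.length, s ^ k)
                 * |wordDeriv F.f F.f' w y|) :=
            mul_le_mul hstep hw (abs_nonneg _) (by positivity)
        _ = Real.exp (K * ∑ k ∈ Finset.range (i :: w).length, s ^ k)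
              * |wordDeriv F.f F.f' (i :: w) y| := by
            simp only [List.length_cons, Finset.sum_range_succ, wordDeriv, abs_mul, mul_add,
              Real.exp_add]
            ring
  refine ⟨Real.exp (K * (1 - s)⁻¹), Real.one_le_exp (mul_nonneg hK0 (inv_nonneg.2 (by linarith))), ?_⟩
  intro w x hx y hy
  obtain ⟨z, hz, hzeq⟩ := norm_exists F w
  rw [hzeq]
  refine (main w z hz y hy).trans (mul_le_mul_of_nonneg_right ?_ (abs_nonneg _))
  rw [Real.exp_le_exp]
  refine mul_le_mul_of_nonneg_left ?_ hK0
  calc ∑ k ∈ Finset.range w.length, s ^ k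
      ≤ ∑' k : ℕ, s ^ k := Summable.sum_le_tsum _ (fun k _ => pow_nonneg hs0 k)
        (summable_geometric_of_lt_one hs0 hs1)
    _ = (1 - s)⁻¹ := tsum_geometric_of_lt_one hs0 hs1

lemma norm_submul (w₁ w₂ : List Λ) :
    wordDerivNorm F.f F.f' (w₁ ++ w₂) ≤ wordDerivNorm F.f F.f' w₁ * wordDerivNorm F.f F.f' w₂ := by
  obtain ⟨x, hx, hxeq⟩ := norm_exists F (w₁ ++ w₂)
  rw [hxeq, wordDeriv_append, abs_mul]
  exact mul_le_mul (le_norm F w₁ (compWord_mapsTo F w₂ hx)) (le_norm F w₂ hx)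
    (abs_nonneg _) (norm_nonneg' F w₁)

lemma pow_le_wordDeriv {b : ℝ} (hb0 : 0 ≤ b) (hb : ∀ i : Λ, ∀ x ∈ Icc (0:ℝ) 1, b ≤ |F.f' i x|)
    (w : List Λ) {x : ℝ} (hx : x ∈ Icc (0:ℝ) 1) :
    b ^ w.length ≤ |wordDeriv F.f F.f' w x| := by
  induction w with
  | nil => simp [wordDeriv]
  | cons i w ih =>
    calc b ^ (i :: w).length = b * b ^ w.length := by rw [List.length_cons, pow_succ]; ring
      _ ≤ |F.f' i (compWord F.f w x)| * |wordDeriv F.f F.f' w x| :=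
          mul_le_mul (hb i _ (compWord_mapsTo F w hx)) ih (pow_nonneg hb0 _)
            (abs_nonneg _)
      _ = |wordDeriv F.f F.f' (i :: w) x| := by simp [wordDeriv, abs_mul]

lemma wordDerivNorm_nil : wordDerivNorm F.f F.f' ([] : List Λ) = 1 := by
  have : (fun x : ℝ => |wordDeriv F.f F.f' ([] : List Λ) x|) '' Icc (0:ℝ) 1 = {1} := by
    rw [show (fun x : ℝ => |wordDeriv F.f F.f' ([] : List Λ) x|) = fun _ => 1 by
      funext x; simp [wordDeriv]]
    rw [Set.Nonempty.image_const Icc_ne 1]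
  rw [wordDerivNorm, this, csSup_singleton]


lemma rhoDist_self {Γ : Type*} (val : List Γ → ℝ) (u : ℕ → Γ) : rhoDist val u u = 0 := by
  unfold rhoDist
  rw [dif_pos rfl]

lemma rhoDist_ne {Γ : Type*} (val : List Γ → ℝ) {u v : ℕ → Γ} (h : u ≠ v) :
    ∃ M : ℕ, (∀ k < M, u k = v k) ∧ u M ≠ v M ∧
      rhoDist val u v = val (List.ofFn fun k : Fin M => u k.val) := by
  classical
  unfold rhoDist
  rw [dif_neg h]
  exact ⟨Nat.find (Function.ne_iff.mp h),
    fun k hk => not_not.mp (Nat.find_min (Function.ne_iff.mp h) hk),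
    Nat.find_spec (Function.ne_iff.mp h), rfl⟩

lemma ofFn_nat_congr {Γ : Type*} (w : ℕ → Γ) {a b : ℕ} (h : a = b) :
    (List.ofFn fun k : Fin a => w k) = List.ofFn fun k : Fin b => w k := by subst h; rfl

lemma ofFn_split {Γ : Type*} (w : ℕ → Γ) (a b : ℕ) :
    (List.ofFn fun k : Fin (a + b) => w k) =
      (List.ofFn fun k : Fin a => w k) ++ List.ofFn fun k : Fin b => w (a + k) := by
  rw [List.ofFn_add]
  rfl

lemma concatMap_apply {Γ : Type*} (n : ℕ) (hn : 0 < n) (u : ℕ → Fin n → Γ) (k : ℕ) (j : Fin n) :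
    concatMap n hn u (n * k + j) = u k j := by
  unfold concatMap
  have h1 : (n * k + (j : ℕ)) / n = k := by
    rw [Nat.mul_add_div hn, Nat.div_eq_of_lt j.isLt, add_zero]
  have h2 : (n * k + (j : ℕ)) % n = (j : ℕ) := by
    rw [Nat.mul_add_mod, Nat.mod_eq_of_lt j.isLt]
  rw [h1]
  exact congrArg (u k) (Fin.ext h2)

end Stmt7Aux

/-- Hölder comparison between `ρ∘γ_n` and `ρ_n`. -/
theorem stmt7 {Λ : Type} [Fintype Λ] [Nonempty Λ] (F : ConformalIFS Λ) :
    ∃ C : ℝ, 0 < C ∧ ∀ (n : ℕ) (hn : 0 < n), ∃ c : ℝ, 0 < c ∧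
      ∀ u v : ℕ → (Fin n → Λ),
        c * (rhoN F n u v) ^ ((1 : ℝ) + C / n)
            ≤ rho F (concatMap n hn u) (concatMap n hn v) ∧
        rho F (concatMap n hn u) (concatMap n hn v) ≤ rhoN F n u v := by
  obtain ⟨D, hD1, hD⟩ := Stmt7Aux.distortion F
  obtain ⟨b, hb0, hbr, hb⟩ := Stmt7Aux.exists_lb F
  have hD0 : (0:ℝ) < D := lt_of_lt_of_le one_pos hD1
  have hb1 : b ≤ 1 := hbr.trans F.ratio_lt_one.le
  have h0I : (0:ℝ) ∈ Icc (0:ℝ) 1 := left_mem_Icc.2 zero_le_one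
  have hloginv : 0 < Real.log F.ratio⁻¹ :=
    Real.log_pos ((one_lt_inv₀ F.ratio_pos).mpr F.ratio_lt_one)
  set C : ℝ := (Real.log D + 1) / Real.log F.ratio⁻¹ with hC_def
  have hC : 0 < C := div_pos (by nlinarith [Real.log_nonneg hD1]) hloginv
  have hkey : F.ratio ^ C ≤ D⁻¹ := by
    rw [Real.rpow_def_of_pos F.ratio_pos]
    have h2 : Real.log F.ratio * C = -(Real.log D + 1) := by
      have hlr : Real.log F.ratio ≠ 0 := (Real.log_neg F.ratio_pos F.ratio_lt_one).ne
      rw [hC_def, Real.log_inv]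
      field_simp
    rw [h2]
    have h3 : Real.exp (-(Real.log D + 1)) ≤ Real.exp (-Real.log D) := by
      rw [Real.exp_le_exp]; linarith
    refine h3.trans ?_
    rw [Real.exp_neg, Real.exp_log hD0]
  refine ⟨C, hC, ?_⟩
  intro n hn
  refine ⟨b ^ n, pow_pos hb0 n, ?_⟩
  intro u v
  by_cases huv : u = v
  · subst huv
    rw [rho, rhoN, Stmt7Aux.rhoDist_self, Stmt7Aux.rhoDist_self]
    rw [Real.zero_rpow (by positivity : (1:ℝ) + C / n ≠ 0)]
    norm_num
  · have hγ : concatMap n hn u ≠ concatMap n hn v := by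
      intro hEq
      apply huv
      funext k j
      have h := congrFun hEq (n * k + j)
      rwa [Stmt7Aux.concatMap_apply, Stmt7Aux.concatMap_apply] at h
    obtain ⟨m, hm_eq, hm_ne, hρn⟩ :=
      Stmt7Aux.rhoDist_ne (fun L : List (Fin n → Λ) =>
        (L.map fun blk => wordDerivNorm F.f F.f' (List.ofFn blk)).prod) huv
    obtain ⟨L, hL_eq, hL_ne, hρ⟩ := Stmt7Aux.rhoDist_ne (wordDerivNorm F.f F.f') hγ
    rw [rho, rhoN, hρ, hρn]
    set P : ℝ := ∏ k : Fin m, wordDerivNorm F.f F.f' (List.ofFn (u k)) with hP_def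
    have hprod : ((List.ofFn fun k : Fin m => u k).map
        fun blk => wordDerivNorm F.f F.f' (List.ofFn blk)).prod = P := by
      rw [List.map_ofFn, List.prod_ofFn]
      rfl
    rw [hprod]
    -- index bounds
    have hmL : n * m ≤ L := by
      by_contra hcon
      push_neg at hcon
      apply hL_ne
      have hdiv : L / n < m := Nat.div_lt_of_lt_mul hcon
      show concatMap n hn u L = concatMap n hn v L
      unfold concatMap
      rw [hm_eq (L / n) hdiv]
    have hLub : L < n * m + n := by
      obtain ⟨j, hj⟩ := Function.ne_iff.mp hm_ne
      by_contra hcon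
      push_neg at hcon
      refine hj ?_
      have h := hL_eq (n * m + j) (by omega)
      rwa [Stmt7Aux.concatMap_apply, Stmt7Aux.concatMap_apply] at h
    -- list decomposition
    set γ : ℕ → Λ := concatMap n hn u with hγ_def
    set T : List Λ := List.ofFn fun k : Fin (L - n * m) => γ (n * m + k) with hT_def
    have hPdecomp : (List.ofFn fun k : Fin L => γ k)
        = (List.ofFn fun k : Fin (n * m) => γ k) ++ T := by
      rw [Stmt7Aux.ofFn_nat_congr γ (show L = n * m + (L - n * m) by omega),
        Stmt7Aux.ofFn_split]
    have hsplit : ∀ m' : ℕ, (List.ofFn fun k : Fin (n * (m' + 1)) => γ k)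
        = (List.ofFn fun k : Fin (n * m') => γ k) ++ List.ofFn (u m') := by
      intro m'
      rw [Stmt7Aux.ofFn_nat_congr γ (Nat.mul_succ n m'), Stmt7Aux.ofFn_split]
      congr 1
      exact congrArg List.ofFn (funext fun k => Stmt7Aux.concatMap_apply n hn u m' k)
    -- upper bound for prefixes
    have hAub : ∀ m' : ℕ, wordDerivNorm F.f F.f' (List.ofFn fun k : Fin (n * m') => γ k)
        ≤ ∏ k : Fin m', wordDerivNorm F.f F.f' (List.ofFn (u k)) := by
      intro m'
      induction m' with
      | zero =>
        rw [Stmt7Aux.ofFn_nat_congr γ (Nat.mul_zero n), List.ofFn_zero,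
          Stmt7Aux.wordDerivNorm_nil]
        simp
      | succ m' ih =>
        rw [hsplit m', Fin.prod_univ_castSucc]
        refine (Stmt7Aux.norm_submul F _ _).trans ?_
        simp only [Fin.coe_castSucc, Fin.val_last]
        exact mul_le_mul_of_nonneg_right ih (Stmt7Aux.norm_nonneg' F _)
    -- lower bound for prefixes
    have hAlb : ∀ m' : ℕ, ∀ x ∈ Icc (0:ℝ) 1,
        D⁻¹ ^ m' * ∏ k : Fin m', wordDerivNorm F.f F.f' (List.ofFn (u k))
          ≤ |wordDeriv F.f F.f' (List.ofFn fun k : Fin (n * m') => γ k) x| := by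
      intro m'
      induction m' with
      | zero =>
        intro x hx
        rw [Stmt7Aux.ofFn_nat_congr γ (Nat.mul_zero n), List.ofFn_zero]
        simp [wordDeriv]
      | succ m' ih =>
        intro x hx
        rw [hsplit m', Stmt7Aux.wordDeriv_append, abs_mul]
        have h1 := ih (compWord F.f (List.ofFn (u m')) x)
          (Stmt7Aux.compWord_mapsTo F _ hx)
        have h2 : D⁻¹ * wordDerivNorm F.f F.f' (List.ofFn (u m'))
            ≤ |wordDeriv F.f F.f' (List.ofFn (u m')) x| := by
          calc D⁻¹ * wordDerivNorm F.f F.f' (List.ofFn (u m'))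
              ≤ D⁻¹ * (D * |wordDeriv F.f F.f' (List.ofFn (u m')) x|) :=
                mul_le_mul_of_nonneg_left (hD _ 0 h0I x hx) (inv_nonneg.2 hD0.le)
            _ = |wordDeriv F.f F.f' (List.ofFn (u m')) x| := by field_simp
        calc D⁻¹ ^ (m' + 1) * ∏ k : Fin (m' + 1), wordDerivNorm F.f F.f' (List.ofFn (u k))
            = (D⁻¹ ^ m' * ∏ k : Fin m', wordDerivNorm F.f F.f' (List.ofFn (u k)))
                * (D⁻¹ * wordDerivNorm F.f F.f' (List.ofFn (u m'))) := by
              rw [Fin.prod_univ_castSucc, pow_succ]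
              simp only [Fin.coe_castSucc, Fin.val_last]
              ring
          _ ≤ |wordDeriv F.f F.f' (List.ofFn fun k : Fin (n * m') => γ k)
                  (compWord F.f (List.ofFn (u m')) x)|
                * |wordDeriv F.f F.f' (List.ofFn (u m')) x| := by
              refine mul_le_mul h1 h2 ?_ (abs_nonneg _)
              exact mul_nonneg (inv_nonneg.2 hD0.le) (Stmt7Aux.norm_nonneg' F _)
    -- positivity and ratio bound for P
    have hNpos : ∀ w : List Λ, 0 < wordDerivNorm F.f F.f' w := by
      intro w
      exact lt_of_lt_of_le (pow_pos hb0 w.length)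
        ((Stmt7Aux.pow_le_wordDeriv F hb0.le hb w h0I).trans (Stmt7Aux.le_norm F w h0I))
    have hPpos : 0 < P := Finset.prod_pos fun k _ => hNpos _
    have hP1 : P ≤ F.ratio ^ (n * m) := by
      calc P ≤ ∏ _k : Fin m, F.ratio ^ n := by
            refine Finset.prod_le_prod (fun k _ => (Stmt7Aux.norm_nonneg' F _)) ?_
            intro k _
            have h := Stmt7Aux.norm_le_pow F (List.ofFn (u k))
            rwa [List.length_ofFn] at h
        _ = (F.ratio ^ n) ^ m := by rw [Finset.prod_const, Finset.card_univ, Fintype.card_fin]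
        _ = F.ratio ^ (n * m) := by rw [← pow_mul]
    have hPC : P ^ (C / n) ≤ D⁻¹ ^ m := by
      calc P ^ (C / n) ≤ (F.ratio ^ (n * m)) ^ (C / n) :=
            Real.rpow_le_rpow hPpos.le hP1 (div_nonneg hC.le (Nat.cast_nonneg n))
        _ = (F.ratio ^ C) ^ m := by
            rw [← Real.rpow_natCast F.ratio (n * m), ← Real.rpow_mul F.ratio_pos.le,
              ← Real.rpow_natCast (F.ratio ^ C) m, ← Real.rpow_mul F.ratio_pos.le]
            congr 1
            have hn' : (n:ℝ) ≠ 0 := Nat.cast_ne_zero.2 hn.ne'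
            push_cast
            field_simp
        _ ≤ D⁻¹ ^ m :=
            pow_le_pow_left₀ (Real.rpow_nonneg F.ratio_pos.le C) hkey m
    -- main lower bound on the norm of the full prefix
    have hNP_lb : D⁻¹ ^ m * P * b ^ n
        ≤ wordDerivNorm F.f F.f' (List.ofFn fun k : Fin L => γ k) := by
      refine le_trans ?_ (Stmt7Aux.le_norm F _ h0I)
      rw [hPdecomp, Stmt7Aux.wordDeriv_append, abs_mul]
      have h1 := hAlb m (compWord F.f T 0) (Stmt7Aux.compWord_mapsTo F T h0I)
      have h2 : b ^ n ≤ |wordDeriv F.f F.f' T 0| := by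
        have h3 := Stmt7Aux.pow_le_wordDeriv F hb0.le hb T h0I
        have hlen : T.length = L - n * m := by rw [hT_def, List.length_ofFn]
        refine le_trans ?_ h3
        rw [hlen]
        exact pow_le_pow_of_le_one hb0.le hb1 (by omega)
      refine mul_le_mul h1 h2 (pow_nonneg hb0.le n) (abs_nonneg _)
    have hUB : wordDerivNorm F.f F.f' (List.ofFn fun k : Fin L => γ k) ≤ P := by
      rw [hPdecomp]
      refine (Stmt7Aux.norm_submul F _ _).trans ?_
      have h1 : wordDerivNorm F.f F.f' T ≤ 1 :=
        (Stmt7Aux.norm_le_pow F T).trans (pow_le_one₀ F.ratio_pos.le F.ratio_lt_one.le)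
      calc wordDerivNorm F.f F.f' (List.ofFn fun k : Fin (n * m) => γ k)
            * wordDerivNorm F.f F.f' T ≤ P * 1 :=
            mul_le_mul (hAub m) h1 (Stmt7Aux.norm_nonneg' F _)
              (Finset.prod_nonneg fun k _ => Stmt7Aux.norm_nonneg' F _)
        _ = P := mul_one _
    refine ⟨?_, hUB⟩
    calc b ^ n * P ^ ((1:ℝ) + C / n) = b ^ n * (P * P ^ (C / n)) := by
          rw [Real.rpow_add hPpos, Real.rpow_one]
      _ ≤ b ^ n * (P * D⁻¹ ^ m) := by
          refine mul_le_mul_of_nonneg_left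
            (mul_le_mul_of_nonneg_left hPC hPpos.le) (pow_nonneg hb0.le n)
      _ = D⁻¹ ^ m * P * b ^ n := by ring
      _ ≤ wordDerivNorm F.f F.f' (List.ofFn fun k : Fin L => γ k) := hNP_lb

end
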